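/- Let d ≥ 3 be an odd integer, let k be a positive integer, let φ(x) = x^d + kd·x^{d−1} − kd ∈ ℤ[x], and let a = −k(d−1). Then φ^n(a) > 0 for all n ≥ 1. -/

import Mathlib

open Polynomial

noncomputable section

/-- The `n`-th iterate of a polynomial under composition: `polyIter φ 0 = X`,
`polyIter φ (n+1) = φ ∘ (polyIter φ n)`. -/
def polyIter {R : Type*} [CommRing R] (φ : Polynomial R) : ℕ → Polynomial R
  | 0 => X
  | n + 1 => φ.comp (polyIter φ n)

/-- The splitting field `K_n` of the `n`-th iterate of `φ ∈ ℤ[x]` over `ℚ`, inside a fixed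
algebraic closure of `ℚ`. -/
def Kfield (φ : Polynomial ℤ) (n : ℕ) : IntermediateField ℚ (AlgebraicClosure ℚ) :=
  IntermediateField.adjoin ℚ ((polyIter φ n).rootSet (AlgebraicClosure ℚ))

/-- The order of `Gal(K_n / K_{n-1})`: the number of automorphisms of `K_n` over `ℚ`
fixing every element of `K_{n-1}` pointwise. -/
def relGalCard (φ : Polynomial ℤ) (n : ℕ) : ℕ :=
  Nat.card {σ : Kfield φ n ≃ₐ[ℚ] Kfield φ n //
    ∀ (x : AlgebraicClosure ℚ) (_ : x ∈ Kfield φ (n - 1)) (hx' : x ∈ Kfield φ n),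
      σ ⟨x, hx'⟩ = ⟨x, hx'⟩}

end

/-- Let `d ≥ 3` be odd, `k ≥ 1`, `φ(x) = x^d + kd·x^{d-1} - kd`, and
`a = -k(d-1)`. Then `φ^n(a) > 0` for all `n ≥ 1`. -/
theorem stmt_10 (d k : ℕ) (hd3 : 3 ≤ d) (hodd : Odd d) (hk : 0 < k)
    (φ : Polynomial ℤ)
    (hφ : φ = X ^ d + C ((k : ℤ) * d) * X ^ (d - 1) - C ((k : ℤ) * d))
    (a : ℤ) (ha : a = -(k : ℤ) * ((d : ℤ) - 1)) :
    ∀ n : ℕ, 1 ≤ n → 0 < (polyIter φ n).eval a := by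
  have heval : ∀ x : ℤ, φ.eval x = x ^ d + (k : ℤ) * d * x ^ (d - 1) - (k : ℤ) * d := by
    intro x
    simp [hφ]
  -- step lemma
  have hstep : ∀ x : ℤ, 1 ≤ x → 1 ≤ φ.eval x := by
    intro x hx
    rw [heval]
    have h1 : (1:ℤ) ≤ x ^ d := one_le_pow₀ hx
    have h2 : (1:ℤ) ≤ x ^ (d - 1) := one_le_pow₀ hx
    have h3 : (0:ℤ) ≤ (k : ℤ) * d := by positivity
    nlinarith [mul_nonneg h3 (sub_nonneg.mpr h2)]
  -- base case computation
  set N : ℕ := k * (d - 1) with hN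
  have hNcast : (N : ℤ) = (k : ℤ) * ((d : ℤ) - 1) := by
    have : (1:ℕ) ≤ d := by omega
    rw [Nat.cast_mul, Nat.cast_sub this]
    push_cast
    ring
  have hN2 : 2 ≤ N := by
    calc 2 ≤ d - 1 := by omega
    _ = 1 * (d - 1) := (one_mul _).symm
    _ ≤ k * (d - 1) := Nat.mul_le_mul_right _ hk
  have hpow : d + 1 ≤ N ^ (d - 1) := by
    have h2p : d + 1 ≤ 2 ^ (d - 1) := by
      have h := Nat.lt_two_pow_self (n := d - 2)
      have : d - 1 = (d - 2) + 1 := by omega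
      rw [this, pow_succ]
      omega
    calc d + 1 ≤ 2 ^ (d - 1) := h2p
    _ ≤ N ^ (d - 1) := Nat.pow_le_pow_left hN2 _
  have hpowZ : (d : ℤ) + 1 ≤ (N : ℤ) ^ (d - 1) := by exact_mod_cast hpow
  have haN : a = -(N : ℤ) := by rw [ha, hNcast]; ring
  have hdeven : Even (d - 1) := by
    rcases hodd with ⟨m, hm⟩
    exact ⟨m, by omega⟩
  have hbase : 1 ≤ φ.eval a := by
    rw [heval, haN]
    have e1 : (-(N:ℤ)) ^ (d - 1) = (N:ℤ) ^ (d - 1) := hdeven.neg_pow _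
    have e2 : (-(N:ℤ)) ^ d = -((N:ℤ) ^ d) := hodd.neg_pow _
    rw [e1, e2]
    have e3 : (N:ℤ) ^ d = (N:ℤ) * (N:ℤ) ^ (d - 1) := by
      conv_lhs => rw [show d = (d - 1) + 1 by omega]
      ring
    rw [e3]
    have hkd : (N : ℤ) = (k:ℤ) * d - (k:ℤ) := by rw [hNcast]; ring
    have hk1 : (1:ℤ) ≤ (k:ℤ) := by exact_mod_cast hk
    nlinarith [hpowZ, hk1]
  intro n hn
  induction n with
  | zero => omega
  | succ n ih =>
    rcases Nat.eq_zero_or_pos n with h | h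
    · subst h
      have : polyIter φ 1 = φ.comp X := rfl
      rw [this, eval_comp, eval_X]
      omega
    · have h1 := ih h
      have : polyIter φ (n + 1) = φ.comp (polyIter φ n) := rfl
      rw [this, eval_comp]
      have := hstep _ (by omega : 1 ≤ (polyIter φ n).eval a)
      omega
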